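/- Let K₀ be an n×n real symmetric positive semidefinite matrix and M ≥ 1 an integer. Suppose that for each m = 0, …, M−1 we are given an r_m×n real matrix Φ_m with rank(Φ_m) = r_m and R(Φ_mᵀ) ∩ R(K_m)^⊥ = {0}, where the matrices K_m are defined recursively by K_{m+1} = K_m − K_m Φ_mᵀ (Φ_m K_m Φ_mᵀ)⁻¹ Φ_m K_m. Then for every m = 0, …, M−1 the matrix Φ_m K_m Φ_mᵀ is positive definite (so the recursion is well defined), and for every m = 0, …, M the matrix K_m is symmetric positive semidefinite. -/

import Mathlib

open Matrix

lemma aux_transpose_inj {r n : ℕ} (Φ : Matrix (Fin r) (Fin n) ℝ) (h : Φ.rank = r) :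
    Function.Injective (Φᵀ.mulVecLin) := by
  rw [← LinearMap.ker_eq_bot]
  have h1 : Module.finrank ℝ (LinearMap.range Φᵀ.mulVecLin) = r := by
    have : Φᵀ.rank = r := by rw [Matrix.rank_transpose]; exact h
    simpa [Matrix.rank] using this
  have h2 := LinearMap.finrank_range_add_finrank_ker (Φᵀ.mulVecLin)
  rw [h1, Module.finrank_fin_fun] at h2
  have : Module.finrank ℝ (LinearMap.ker Φᵀ.mulVecLin) = 0 := by omega
  exact Submodule.finrank_eq_zero.mp this

/-- Step 1: under the hypotheses, Φ K Φᵀ is positive definite. -/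
lemma aux_posdef {r n : ℕ} (Φ : Matrix (Fin r) (Fin n) ℝ)
    (K : Matrix (Fin n) (Fin n) ℝ) (hK : K.PosSemidef) (hrank : Φ.rank = r)
    (horth : ∀ x : Fin n → ℝ,
      x ∈ LinearMap.range (Φᵀ).mulVecLin →
      (∀ y : Fin n → ℝ, y ∈ LinearMap.range K.mulVecLin → x ⬝ᵥ y = 0) →
      x = 0) :
    (Φ * K * Φᵀ).PosDef := by
  have hpsd : (Φ * K * Φᵀ).PosSemidef := by
    have := hK.mul_mul_conjTranspose_same Φ
    simpa using this
  refine ⟨hpsd.1, fun v hv => ?_⟩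
  rcases lt_or_eq_of_le (hpsd.2 v) with h | h
  · simpa using h
  exfalso
  -- the quadratic form vanishes; show v = 0
  set x : Fin n → ℝ := Φᵀ *ᵥ v with hx
  have hquad : x ⬝ᵥ K *ᵥ x = 0 := by
    have : v ⬝ᵥ (Φ * K * Φᵀ) *ᵥ v = x ⬝ᵥ K *ᵥ x := by
      rw [← mulVec_mulVec, ← mulVec_mulVec, dotProduct_mulVec v Φ,
        ← mulVec_transpose, hx]
    have h0 : v ⬝ᵥ (Φ * K * Φᵀ) *ᵥ v = 0 := by
      simpa [dotProduct, mulVec, Finsupp.sum_fintype, Finset.mul_sum, mul_assoc] using h.symm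
    rw [← this]; exact h0
  have hKx : K *ᵥ x = 0 := by
    have := (hK.dotProduct_mulVec_zero_iff x).mp (by simpa using hquad)
    exact this
  have hx0 : x = 0 := by
    refine horth x ⟨v, rfl⟩ ?_
    rintro y ⟨z, rfl⟩
    -- x ⬝ᵥ K z = (K x) ⬝ᵥ z = 0
    have : x ⬝ᵥ K.mulVecLin z = x ᵥ* K ⬝ᵥ z := by
      simp [Matrix.dotProduct_mulVec]
    rw [this]
    have hxK : x ᵥ* K = 0 := by
      have h2 : x ᵥ* K = Kᵀ *ᵥ x := by rw [mulVec_transpose]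
      have hKsym : Kᵀ = K := by
        rw [← conjTranspose_eq_transpose_of_trivial]; exact hK.1.eq
      rw [h2, hKsym, hKx]
    rw [hxK, zero_dotProduct]
  have : v = 0 := by
    rw [← Finsupp.coe_eq_zero]
    apply aux_transpose_inj Φ hrank
    show Φᵀ.mulVecLin v = Φᵀ.mulVecLin 0
    rw [map_zero]
    exact hx0
  exact hv this

/-- Step 2: the residual is positive semidefinite. -/
lemma aux_residual {r n : ℕ} (Φ : Matrix (Fin r) (Fin n) ℝ)
    (K : Matrix (Fin n) (Fin n) ℝ) (hK : K.PosSemidef)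
    (hB : (Φ * K * Φᵀ).PosDef) :
    (K - K * Φᵀ * (Φ * K * Φᵀ)⁻¹ * (Φ * K)).PosSemidef := by
  set B := Φ * K * Φᵀ with hBdef
  have hdet : IsUnit B.det := isUnit_iff_ne_zero.mpr hB.det_pos.ne'
  have hBinv : B * B⁻¹ = 1 := mul_nonsing_inv B hdet
  have hBsym : Bᵀ = B := hB.1.eq
  have hKsym : Kᵀ = K := by
    rw [← conjTranspose_eq_transpose_of_trivial]; exact hK.1.eq
  have hBinvsym : (B⁻¹)ᵀ = B⁻¹ := by
    rw [transpose_nonsing_inv, hBsym]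
  set W : Matrix (Fin n) (Fin n) ℝ := 1 - Φᵀ * B⁻¹ * (Φ * K) with hW
  have key : K - K * Φᵀ * B⁻¹ * (Φ * K) = Wᵀ * K * W := by
    have hWt : Wᵀ = 1 - K * Φᵀ * B⁻¹ * Φ := by
      rw [hW, transpose_sub, transpose_one, transpose_mul, transpose_mul,
        transpose_mul, transpose_transpose, hBinvsym, hKsym]
      simp only [Matrix.mul_assoc]
    rw [hWt, hW]
    have expand : (1 - K * Φᵀ * B⁻¹ * Φ) * K * (1 - Φᵀ * B⁻¹ * (Φ * K)) =
        K - K * Φᵀ * B⁻¹ * (Φ * K) - K * Φᵀ * B⁻¹ * (Φ * K)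
          + K * Φᵀ * B⁻¹ * (Φ * K * Φᵀ) * B⁻¹ * (Φ * K) := by
      simp only [Matrix.mul_sub, Matrix.sub_mul, Matrix.mul_one, Matrix.one_mul,
        Matrix.mul_assoc]
      abel
    rw [expand, ← hBdef]
    have : K * Φᵀ * B⁻¹ * B * B⁻¹ * (Φ * K) = K * Φᵀ * B⁻¹ * (Φ * K) := by
      have h1 : B⁻¹ * B * B⁻¹ = B⁻¹ := by
        rw [nonsing_inv_mul B hdet, one_mul]
      calc K * Φᵀ * B⁻¹ * B * B⁻¹ * (Φ * K)
          = K * Φᵀ * (B⁻¹ * B * B⁻¹) * (Φ * K) := by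
            simp only [Matrix.mul_assoc]
        _ = K * Φᵀ * B⁻¹ * (Φ * K) := by rw [h1]
    rw [this]
    abel
  rw [key]
  have := hK.conjTranspose_mul_mul_same W
  simpa using this

theorem mralp_residuals_posSemidef {n : ℕ} (M : ℕ) (hM : 1 ≤ M) (r : ℕ → ℕ)
    (Φ : (m : ℕ) → Matrix (Fin (r m)) (Fin n) ℝ)
    (K : ℕ → Matrix (Fin n) (Fin n) ℝ)
    (hK0 : (K 0).PosSemidef)
    (hrank : ∀ m < M, (Φ m).rank = r m)
    (horth : ∀ m < M, ∀ x : Fin n → ℝ,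
      x ∈ LinearMap.range ((Φ m)ᵀ).mulVecLin →
      (∀ y : Fin n → ℝ, y ∈ LinearMap.range (K m).mulVecLin → x ⬝ᵥ y = 0) →
      x = 0)
    (hrec : ∀ m < M,
      K (m + 1) = K m - K m * (Φ m)ᵀ * (Φ m * K m * (Φ m)ᵀ)⁻¹ * (Φ m * K m)) :
    (∀ m < M, (Φ m * K m * (Φ m)ᵀ).PosDef) ∧ (∀ m ≤ M, (K m).PosSemidef) := by
  have hpsd : ∀ m ≤ M, (K m).PosSemidef := by
    intro m
    induction m with
    | zero => intro _; exact hK0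
    | succ k ih =>
      intro hk
      have hkM : k < M := Nat.lt_of_succ_le hk
      have hKk := ih (le_of_lt hkM)
      have hB := aux_posdef (Φ k) (K k) hKk (hrank k hkM) (horth k hkM)
      rw [hrec k hkM]
      exact aux_residual (Φ k) (K k) hKk hB
  refine ⟨fun m hm => ?_, hpsd⟩
  exact aux_posdef (Φ m) (K m) (hpsd m (le_of_lt hm)) (hrank m hm) (horth m hm)
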